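/- (Theorem 3.2) Let P_k denote the normalized shifted Legendre polynomial of degree k on [0,1] and ξ₁ = 1/(2√3). Let S be a finite set of pairs (i,j) of nonnegative integers such that i + j is even and i + j > 1 for every (i,j) ∈ S, let α₀₀ ∈ ℝ and α_{(i,j)} ∈ ℝ for (i,j) ∈ S, and define Ā(τ,σ) = α₀₀ − (ξ₁/2) P₁(σ) + (ξ₁/2) P₁(τ) + Σ_{(i,j)∈S} α_{(i,j)} P_i(τ) P_j(σ). Then Ā(τ,σ) − Ā(1−τ,1−σ) = τ − σ for all τ, σ ∈ [0,1], and consequently the csRKN method with coefficients (Ā, B̄(τ) = 1 − τ, B(τ) = 1, C(τ) = τ) satisfies the symmetry conditions C(τ) = 1 − C(1−τ), Ā(τ,σ) = B(1−σ)(1 − C(1−τ)) − B̄(1−σ) + Ā(1−τ,1−σ), B̄(τ) = B(1−τ) − B̄(1−τ), B(τ) = B(1−τ) for all τ, σ ∈ [0,1]. -/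

import Mathlib

open Set

noncomputable section

/-- The normalized shifted Legendre polynomial of degree `k` on `[0,1]`,
given by the Rodrigues formula `P_k(x) = (√(2k+1)/k!) dᵏ/dxᵏ [(x² - x)ᵏ]`. -/
def legP (k : ℕ) (x : ℝ) : ℝ :=
  (Real.sqrt (2 * (k : ℝ) + 1) / (Nat.factorial k : ℝ)) *
    iteratedDeriv k (fun y : ℝ => (y ^ 2 - y) ^ k) x

/-- `ξ₁ = 1/(2√3)`. -/
def xi1 : ℝ := 1 / (2 * Real.sqrt 3)

lemma legP_symm (k : ℕ) (x : ℝ) : legP k (1 - x) = (-1 : ℝ) ^ k * legP k x := by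
  have key : iteratedDeriv k (fun y : ℝ => (y ^ 2 - y) ^ k) x
      = (-1 : ℝ) ^ k * iteratedDeriv k (fun y : ℝ => (y ^ 2 - y) ^ k) (1 - x) := by
    have hfun : (fun y : ℝ => (y ^ 2 - y) ^ k)
        = fun y : ℝ => ((1 + (-y)) ^ 2 - (1 + (-y))) ^ k := by
      funext y; ring_nf
    calc iteratedDeriv k (fun y : ℝ => (y ^ 2 - y) ^ k) x
        = iteratedDeriv k (fun y : ℝ => ((1 + (-y)) ^ 2 - (1 + (-y))) ^ k) x := by rw [← hfun]
      _ = (-1 : ℝ) ^ k • iteratedDeriv k (fun z : ℝ => ((1 + z) ^ 2 - (1 + z)) ^ k) (-x) := by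
          exact iteratedDeriv_comp_neg k (fun z : ℝ => ((1 + z) ^ 2 - (1 + z)) ^ k) x
      _ = (-1 : ℝ) ^ k * iteratedDeriv k (fun y : ℝ => (y ^ 2 - y) ^ k) (1 + (-x)) := by
          rw [iteratedDeriv_comp_const_add k (fun y : ℝ => (y ^ 2 - y) ^ k) 1]
          simp [smul_eq_mul]
      _ = (-1 : ℝ) ^ k * iteratedDeriv k (fun y : ℝ => (y ^ 2 - y) ^ k) (1 - x) := by
          rw [← sub_eq_add_neg]
  unfold legP
  rw [key]
  have h2 : ((-1 : ℝ)) ^ (k * 2) = 1 := by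
    rw [mul_comm k 2, pow_mul]; norm_num
  linear_combination (-(Real.sqrt (2 * (k : ℝ) + 1) / (Nat.factorial k : ℝ) *
    iteratedDeriv k (fun y : ℝ => (y ^ 2 - y) ^ k) (1 - x))) * h2

lemma legP_one (x : ℝ) : legP 1 x = Real.sqrt 3 * (2 * x - 1) := by
  unfold legP
  have : iteratedDeriv 1 (fun y : ℝ => (y ^ 2 - y) ^ 1) x = 2 * x - 1 := by
    rw [iteratedDeriv_one]
    have : (fun y : ℝ => (y ^ 2 - y) ^ 1) = fun y : ℝ => y ^ 2 - y := by funext y; ring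
    rw [this]
    have h1 : HasDerivAt (fun y : ℝ => y ^ 2 - y) (2 * x - 1) x := by
      have h : HasDerivAt (fun y : ℝ => y ^ 2 - y) ((2:ℕ) * x ^ (2 - 1) - 1) x :=
        (hasDerivAt_pow 2 x).sub (hasDerivAt_id' x)
      convert h using 1
      norm_num
    exact h1.deriv
  rw [this]
  norm_num

/-- Theorem 3.2: if
`Ā(τ,σ) = α₀₀ - (ξ₁/2)P₁(σ) + (ξ₁/2)P₁(τ) + Σ_{(i,j)∈S} α_{(i,j)} P_i(τ)P_j(σ)`
with `i + j` even and `> 1` for all `(i,j) ∈ S`, then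
`Ā(τ,σ) - Ā(1-τ,1-σ) = τ - σ` on `[0,1]²`, and consequently the coefficients
`(Ā, B̄(τ)=1-τ, B(τ)=1, C(τ)=τ)` satisfy the csRKN symmetry conditions. -/
theorem legendre_expansion_symmetric
    (S : Finset (ℕ × ℕ)) (hS : ∀ p ∈ S, Even (p.1 + p.2) ∧ 1 < p.1 + p.2)
    (α₀₀ : ℝ) (α : ℕ × ℕ → ℝ)
    (Abar : ℝ → ℝ → ℝ) (Bbar B C : ℝ → ℝ)
    (hAbar : ∀ τ σ : ℝ, Abar τ σ =
      α₀₀ - (xi1 / 2) * legP 1 σ + (xi1 / 2) * legP 1 τ +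
        ∑ p ∈ S, α p * legP p.1 τ * legP p.2 σ)
    (hBbar : ∀ τ, Bbar τ = 1 - τ) (hB : ∀ τ, B τ = 1) (hC : ∀ τ, C τ = τ) :
    (∀ τ ∈ Set.Icc (0:ℝ) 1, ∀ σ ∈ Set.Icc (0:ℝ) 1,
        Abar τ σ - Abar (1 - τ) (1 - σ) = τ - σ) ∧
    (∀ τ ∈ Set.Icc (0:ℝ) 1, C τ = 1 - C (1 - τ)) ∧
    (∀ τ ∈ Set.Icc (0:ℝ) 1, ∀ σ ∈ Set.Icc (0:ℝ) 1,
        Abar τ σ = B (1 - σ) * (1 - C (1 - τ)) - Bbar (1 - σ) + Abar (1 - τ) (1 - σ)) ∧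
    (∀ τ ∈ Set.Icc (0:ℝ) 1, Bbar τ = B (1 - τ) - Bbar (1 - τ)) ∧
    (∀ τ ∈ Set.Icc (0:ℝ) 1, B τ = B (1 - τ)) := by
  have sqrt3_pos : (0:ℝ) < Real.sqrt 3 := Real.sqrt_pos.mpr (by norm_num)
  have main : ∀ τ σ : ℝ, Abar τ σ - Abar (1 - τ) (1 - σ) = τ - σ := by
    intro τ σ
    have hsum : ∑ p ∈ S, α p * legP p.1 (1 - τ) * legP p.2 (1 - σ)
        = ∑ p ∈ S, α p * legP p.1 τ * legP p.2 σ := by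
      apply Finset.sum_congr rfl
      intro p hp
      rw [legP_symm, legP_symm]
      have hev := (hS p hp).1
      have : (-1 : ℝ) ^ p.1 * (-1 : ℝ) ^ p.2 = 1 := by
        rw [← pow_add]
        exact hev.neg_one_pow
      linear_combination (α p * legP p.1 τ * legP p.2 σ) * this
    rw [hAbar, hAbar, hsum, legP_symm 1 τ, legP_symm 1 σ, legP_one, legP_one]
    have hxi : xi1 * Real.sqrt 3 = 1 / 2 := by
      unfold xi1
      field_simp
    simp only [pow_one]
    linear_combination (2 * τ - 2 * σ) * hxi
  refine ⟨fun τ _ σ _ => main τ σ, ?_, ?_, ?_, ?_⟩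
  · intro τ _; rw [hC, hC]; ring
  · intro τ _ σ _
    rw [hB, hC, hBbar]
    have := main τ σ
    linarith
  · intro τ _; rw [hBbar, hB, hBbar]; ring
  · intro τ _; rw [hB, hB]
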